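/- A sequence (ψ_k) in a Hilbert space H is a Bessel sequence for H if and only if its frame operator S has domain equal to all of H, i.e., ∑ ⟨f,ψ_k⟩ψ_k converges for every f ∈ H. -/

import Mathlib

open Filter Topology
open scoped ComplexInnerProductSpace

private lemma besselKey {H : Type*} [NormedAddCommGroup H] [InnerProductSpace ℂ H]
    (ψ : ℕ → H) (B : ℝ) (hB : 0 ≤ B)
    (hb : ∀ f : H, (Summable fun k => ‖⟪ψ k, f⟫‖ ^ 2) ∧ ∑' k, ‖⟪ψ k, f⟫‖ ^ 2 ≤ B * ‖f‖ ^ 2)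
    (c : ℕ → ℂ) (F : Finset ℕ) :
    ‖∑ k ∈ F, c k • ψ k‖ ^ 2 ≤ B * ∑ k ∈ F, ‖c k‖ ^ 2 := by
  set g : H := ∑ k ∈ F, c k • ψ k with hg
  have hsum : (0:ℝ) ≤ ∑ k ∈ F, ‖c k‖ ^ 2 := Finset.sum_nonneg fun _ _ => by positivity
  rcases eq_or_lt_of_le (norm_nonneg g) with h0 | h0
  · rw [← h0]; simpa using mul_nonneg hB hsum
  -- main estimate
  have h1 : ‖g‖ ^ 2 = RCLike.re ⟪g, g⟫ := norm_sq_eq_re_inner g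
  have h2 : ⟪g, g⟫ = ∑ k ∈ F, (starRingEnd ℂ) (c k) * ⟪ψ k, g⟫ := by
    rw [hg]
    rw [sum_inner]
    simp [inner_smul_left, inner_sum, inner_smul_right, Finset.mul_sum, mul_left_comm]
  have h3 : ‖g‖ ^ 2 ≤ ∑ k ∈ F, ‖c k‖ * ‖⟪ψ k, g⟫‖ := by
    rw [h1, h2]
    calc RCLike.re (∑ k ∈ F, (starRingEnd ℂ) (c k) * ⟪ψ k, g⟫)
        ≤ ‖∑ k ∈ F, (starRingEnd ℂ) (c k) * ⟪ψ k, g⟫‖ := RCLike.re_le_norm _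
      _ ≤ ∑ k ∈ F, ‖(starRingEnd ℂ) (c k) * ⟪ψ k, g⟫‖ := norm_sum_le _ _
      _ = ∑ k ∈ F, ‖c k‖ * ‖⟪ψ k, g⟫‖ := by
          refine Finset.sum_congr rfl fun k _ => ?_
          rw [norm_mul, RCLike.norm_conj]
  have h4 : ∑ k ∈ F, ‖c k‖ * ‖⟪ψ k, g⟫‖ ≤
      Real.sqrt (∑ k ∈ F, ‖c k‖ ^ 2) * Real.sqrt (∑ k ∈ F, ‖⟪ψ k, g⟫‖ ^ 2) :=
    Real.sum_mul_le_sqrt_mul_sqrt F _ _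
  have h5 : ∑ k ∈ F, ‖⟪ψ k, g⟫‖ ^ 2 ≤ B * ‖g‖ ^ 2 := by
    refine le_trans ?_ (hb g).2
    exact (hb g).1.sum_le_tsum F (fun k _ => by positivity)
  have h6 : Real.sqrt (∑ k ∈ F, ‖⟪ψ k, g⟫‖ ^ 2) ≤ Real.sqrt B * ‖g‖ := by
    rw [← Real.sqrt_sq (norm_nonneg g), ← Real.sqrt_mul hB]
    exact Real.sqrt_le_sqrt (by simpa using h5)
  have h7 : ‖g‖ ^ 2 ≤ Real.sqrt (∑ k ∈ F, ‖c k‖ ^ 2) * (Real.sqrt B * ‖g‖) := by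
    refine h3.trans (h4.trans ?_)
    exact mul_le_mul_of_nonneg_left h6 (Real.sqrt_nonneg _)
  have h8 : ‖g‖ ≤ Real.sqrt (∑ k ∈ F, ‖c k‖ ^ 2) * Real.sqrt B := by
    have := h7
    rw [sq, ← mul_assoc] at this
    exact le_of_mul_le_mul_right this h0
  calc ‖g‖ ^ 2 ≤ (Real.sqrt (∑ k ∈ F, ‖c k‖ ^ 2) * Real.sqrt B) ^ 2 := by
        exact pow_le_pow_left₀ (norm_nonneg g) h8 2
    _ = B * ∑ k ∈ F, ‖c k‖ ^ 2 := by
        rw [mul_pow, Real.sq_sqrt hsum, Real.sq_sqrt hB]; ring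

/-- A sequence `(ψ k)` is a Bessel sequence for `H` if and only if its frame operator `S` has
domain all of `H`, i.e. `∑ ⟨f, ψ k⟩ ψ k` converges for every `f ∈ H`. -/
theorem stmt15 {H : Type*} [NormedAddCommGroup H] [InnerProductSpace ℂ H] [CompleteSpace H]
    (ψ : ℕ → H) :
    (∃ B : ℝ, 0 < B ∧ ∀ f : H,
      (Summable fun k => ‖⟪ψ k, f⟫‖ ^ 2) ∧ ∑' k, ‖⟪ψ k, f⟫‖ ^ 2 ≤ B * ‖f‖ ^ 2)
    ↔ ∀ f : H,
        ∃ s : H, Tendsto (fun n => ∑ k ∈ Finset.range n, ⟪ψ k, f⟫ • ψ k) atTop (𝓝 s) := by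
  constructor
  · rintro ⟨B, hB, hb⟩ f
    set c : ℕ → ℂ := fun k => ⟪ψ k, f⟫ with hc
    have hcs : Summable fun k => ‖c k‖ ^ 2 := (hb f).1
    have hS : Summable fun k => c k • ψ k := by
      rw [summable_iff_vanishing]
      intro e he
      rcases Metric.mem_nhds_iff.1 he with ⟨ε, hε, hball⟩
      have hv := (summable_iff_vanishing.1 hcs) (Metric.ball 0 (ε ^ 2 / B))
        (Metric.ball_mem_nhds 0 (by positivity))
      rcases hv with ⟨s, hs⟩
      refine ⟨s, fun t ht => ?_⟩
      apply hball
      have h1 : ∑ k ∈ t, ‖c k‖ ^ 2 < ε ^ 2 / B := by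
        have := hs t ht
        rw [Metric.mem_ball, dist_zero_right, Real.norm_eq_abs] at this
        exact (le_abs_self _).trans_lt this
      have h2 : ‖∑ k ∈ t, c k • ψ k‖ ^ 2 ≤ B * ∑ k ∈ t, ‖c k‖ ^ 2 :=
        besselKey ψ B hB.le hb c t
      have h3 : ‖∑ k ∈ t, c k • ψ k‖ ^ 2 < ε ^ 2 := by
        calc ‖∑ k ∈ t, c k • ψ k‖ ^ 2 ≤ B * ∑ k ∈ t, ‖c k‖ ^ 2 := h2
          _ < B * (ε ^ 2 / B) := by exact mul_lt_mul_of_pos_left h1 hB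
          _ = ε ^ 2 := by field_simp
      rw [Metric.mem_ball, dist_zero_right]
      nlinarith [norm_nonneg (∑ k ∈ t, c k • ψ k)]
    exact ⟨∑' k, c k • ψ k, hS.hasSum.tendsto_sum_nat⟩
  · intro hconv
    -- Banach–Steinhaus
    set T : ℕ → H →L[ℂ] H :=
      fun n => ∑ k ∈ Finset.range n, (innerSL ℂ (ψ k)).smulRight (ψ k) with hT
    have hTapp : ∀ n f, T n f = ∑ k ∈ Finset.range n, ⟪ψ k, f⟫ • ψ k := by
      intro n f
      simp [hT, ContinuousLinearMap.sum_apply]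
    have hpt : ∀ f : H, ∃ C : ℝ, ∀ n, ‖T n f‖ ≤ C := by
      intro f
      rcases hconv f with ⟨s, hs⟩
      have : Tendsto (fun n => ‖T n f‖) atTop (𝓝 ‖s‖) := by
        simpa [hTapp] using hs.norm
      rcases this.bddAbove_range with ⟨C, hC⟩
      exact ⟨C, fun n => hC (Set.mem_range_self n)⟩
    obtain ⟨C, hC⟩ := banach_steinhaus hpt
    refine ⟨max C 0 + 1, by positivity, fun f => ?_⟩
    set B : ℝ := max C 0 + 1 with hBdef
    have key : ∀ n, ∑ k ∈ Finset.range n, ‖⟪ψ k, f⟫‖ ^ 2 ≤ B * ‖f‖ ^ 2 := by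
      intro n
      have h1 : (⟪f, T n f⟫ : ℂ) = ∑ k ∈ Finset.range n,
          (‖⟪ψ k, f⟫‖ ^ 2 : ℝ) := by
        rw [hTapp, inner_sum]
        push_cast
        refine Finset.sum_congr rfl fun k _ => ?_
        rw [inner_smul_right, ← inner_conj_symm (ψ k) f, mul_comm, RCLike.mul_conj,
          RCLike.norm_conj]
        norm_cast
      have h2 : (∑ k ∈ Finset.range n, ‖⟪ψ k, f⟫‖ ^ 2 : ℝ) = RCLike.re ⟪f, T n f⟫ := by
        rw [h1]; norm_cast
      calc ∑ k ∈ Finset.range n, ‖⟪ψ k, f⟫‖ ^ 2 = RCLike.re ⟪f, T n f⟫ := h2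
        _ ≤ ‖(⟪f, T n f⟫ : ℂ)‖ := RCLike.re_le_norm _
        _ ≤ ‖f‖ * ‖T n f‖ := norm_inner_le_norm f (T n f)
        _ ≤ ‖f‖ * (C * ‖f‖) := by
            refine mul_le_mul_of_nonneg_left ?_ (norm_nonneg f)
            exact (T n).le_of_opNorm_le (hC n) f
        _ ≤ B * ‖f‖ ^ 2 := by
            have hCB : C ≤ B := by rw [hBdef]; nlinarith [le_max_left C (0:ℝ), le_max_right C (0:ℝ)]
            nlinarith [sq_nonneg ‖f‖, norm_nonneg f]
    have hsummable : Summable fun k => ‖⟪ψ k, f⟫‖ ^ 2 :=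
      summable_of_sum_range_le (fun k => by positivity) key
    exact ⟨hsummable, hsummable.tsum_le_of_sum_range_le key⟩
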